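/- For integers d ≥ 2, m ≥ 2, and k = d+1, the number of collinear k-tuples of points in [m]^d is O(m^{d+k-1} log m) = O(m^{2d} log m), where the implicit constant may depend on d but not m. -/

import Mathlib

/-- Bezout for finite families in ℤ. -/
lemma finset_gcd_bezout {ι : Type*} [DecidableEq ι] (s : Finset ι) (f : ι → ℤ) :
    ∃ lam : ι → ℤ, ∑ i ∈ s, lam i * f i = s.gcd f := by
  classical
  induction s using Finset.induction_on with
  | empty => exact ⟨fun _ => 0, by simp⟩
  | insert _ _ ha ih =>
    rename_i a s
    obtain ⟨lam, hlam⟩ := ih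
    set G := s.gcd f with hG
    refine ⟨fun i => if i = a then Int.gcdA (f a) G else lam i * Int.gcdB (f a) G, ?_⟩
    rw [Finset.sum_insert ha, Finset.gcd_insert]
    have h1 : ∑ i ∈ s, (if i = a then Int.gcdA (f a) G else lam i * Int.gcdB (f a) G) * f i
        = (∑ i ∈ s, lam i * f i) * Int.gcdB (f a) G := by
      rw [Finset.sum_mul]
      refine Finset.sum_congr rfl fun i hi => ?_
      have : i ≠ a := fun h => ha (h ▸ hi)
      simp [this]; ring
    have h2 := Int.gcd_eq_gcd_ab (f a) G
    have hcoe : (Int.gcd (f a) G : ℤ) = GCDMonoid.gcd (f a) G := Int.coe_gcd _ _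
    rw [h1, hlam, ← hcoe, h2]
    simp only [if_true]
    ring



/-- Structure of collinear integer tuples: all points are `f 0 + c j • v` for
a nonzero integer direction `v` dividing `f 1 - f 0` coordinatewise. -/
lemma collinear_int_structure {d : ℕ} (hd : 2 ≤ d) (f : Fin (d + 1) → (Fin d → ℤ))
    (hinj : Function.Injective f)
    (hcol : Collinear ℝ (Set.range (fun j => fun i => ((f j i : ℝ))))) :
    ∃ (v : Fin d → ℤ) (c : Fin (d + 1) → ℤ), v ≠ 0 ∧ c 0 = 0 ∧
      (∀ i, |v i| ≤ |f 1 i - f 0 i|) ∧ (∀ j i, f j i = f 0 i + c j * v i) := by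
  classical
  set F : Fin (d + 1) → (Fin d → ℝ) := fun j => fun i => ((f j i : ℝ)) with hF
  obtain ⟨dir, hdir⟩ := (collinear_iff_of_mem (Set.mem_range_self (f := F) 0)).mp hcol
  choose t ht using fun j => hdir (F j) (Set.mem_range_self j)
  -- the integer difference vectors
  set u : Fin (d + 1) → (Fin d → ℤ) := fun j i => f j i - f 0 i with hu
  set w : Fin d → ℤ := fun i => f 1 i - f 0 i with hw
  have h01 : (0 : Fin (d + 1)) ≠ 1 := by
    have : ((0 : Fin (d+1)) : ℕ) ≠ ((1 : Fin (d+1)) : ℕ) := by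
      simp [Fin.val_one']
      omega
    exact fun h => this (by rw [h])
  have hwne : w ≠ 0 := by
    intro h
    apply h01
    apply hinj
    funext i
    have := congrFun h i
    simp [hw] at this
    omega
  -- real form of the differences
  have hreal : ∀ j i, ((u j i : ℝ)) = t j * dir i := by
    intro j i
    have hj := congrFun (ht j) i
    have h0 := congrFun (ht 0) i
    simp [hF] at hj h0
    have h00 : F 0 = t 0 • dir + F 0 := ht 0
    have : (f j i : ℝ) = t j * dir i + (f 0 i : ℝ) := hj
    simp [hu]
    push_cast
    linarith
  -- cross products of differences agree
  have cross : ∀ j i i', u j i * w i' = u j i' * w i := by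
    intro j i i'
    have : ((u j i * w i' : ℤ) : ℝ) = ((u j i' * w i : ℤ) : ℝ) := by
      push_cast
      have h1 := hreal j i
      have h2 := hreal j i'
      have h3 := hreal 1 i
      have h4 := hreal 1 i'
      have hwi : ((w i : ℤ) : ℝ) = t 1 * dir i := by rw [← h3]
      have hwi' : ((w i' : ℤ) : ℝ) = t 1 * dir i' := by rw [← h4]
      rw [h1, h2, hwi, hwi']
      ring
    exact_mod_cast this
  obtain ⟨i₀, hi₀⟩ : ∃ i, w i ≠ 0 := by
    by_contra h
    push_neg at h
    exact hwne (funext h)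
  set g : ℤ := Finset.univ.gcd w with hg
  have hgdvd : ∀ i, g ∣ w i := fun i => Finset.gcd_dvd (Finset.mem_univ i)
  have hgne : g ≠ 0 := by
    intro h
    apply hi₀
    have := hgdvd i₀
    rw [h] at this
    exact zero_dvd_iff.mp this
  set v : Fin d → ℤ := fun i => w i / g with hv
  have hwv : ∀ i, w i = g * v i := fun i => (Int.mul_ediv_cancel' (hgdvd i)).symm
  have hv1 : Finset.univ.gcd v = 1 := Finset.gcd_div_eq_one (Finset.mem_univ i₀) hi₀
  obtain ⟨lam, hlam⟩ := finset_gcd_bezout Finset.univ v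
  rw [hv1] at hlam
  -- cross products with v
  have crossV : ∀ j i i', u j i * v i' = u j i' * v i := by
    intro j i i'
    apply mul_left_cancel₀ hgne
    calc g * (u j i * v i') = u j i * (g * v i') := by ring
    _ = u j i * w i' := by rw [← hwv]
    _ = u j i' * w i := cross j i i'
    _ = u j i' * (g * v i) := by rw [hwv]
    _ = g * (u j i' * v i) := by ring
  set c : Fin (d + 1) → ℤ := fun j => ∑ i, lam i * u j i with hc
  refine ⟨v, c, ?_, ?_, ?_, ?_⟩
  · intro h
    apply hwne
    funext i
    rw [hwv i, congrFun h i]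
    simp
  · simp [hc, hu]
  · intro i
    have key : |v i| ≤ |w i| := by
      rw [hwv i, abs_mul]
      have h1 : 1 ≤ |g| := Int.one_le_abs hgne
      nlinarith [abs_nonneg (v i)]
    exact key
  · intro j i
    have : c j * v i = u j i := by
      calc c j * v i = ∑ i', lam i' * (u j i' * v i) := by
            rw [hc, Finset.sum_mul]; exact Finset.sum_congr rfl fun i' _ => by ring
      _ = ∑ i', lam i' * (u j i * v i') := Finset.sum_congr rfl fun i' _ => by
            rw [crossV j i i']
      _ = u j i * ∑ i', lam i' * v i' := by rw [Finset.mul_sum]; exact Finset.sum_congr rfl fun i' _ => by ring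
      _ = u j i := by rw [hlam, mul_one]
    simp [hu] at this
    omega


/-- Target finset for the counting injection: triples (base point, direction, coefficients). -/
noncomputable def TT (d m : ℕ) : Finset ((Fin d → ℤ) × (Fin d → ℤ) × (Fin (d + 1) → ℤ)) :=
  (Finset.Icc 1 (m - 1)).biUnion fun h =>
    (Finset.Icc (fun _ => 0) (fun _ => (m : ℤ) - 1)) ×ˢ
    ((Finset.Icc (fun _ => -(h : ℤ)) (fun _ => (h : ℤ)) \
      Finset.Icc (fun _ => -((h : ℤ) - 1)) (fun _ => (h : ℤ) - 1)) ×ˢ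
     (Finset.Icc (fun j : Fin (d + 1) => if j = 0 then 0 else -(((m : ℤ) - 1) / (h : ℤ)))
                 (fun j => if j = 0 then 0 else ((m : ℤ) - 1) / (h : ℤ))))

lemma mem_TT {d m : ℕ} (hm : 2 ≤ m) (f : Fin (d + 1) → Fin d → ℤ)
    (v : Fin d → ℤ) (c : Fin (d + 1) → ℤ)
    (hf : ∀ j i, 0 ≤ f j i ∧ f j i < (m : ℤ)) (hv : v ≠ 0) (hc0 : c 0 = 0)
    (hvw : ∀ i, |v i| ≤ |f 1 i - f 0 i|) (heq : ∀ j i, f j i = f 0 i + c j * v i) :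
    (f 0, v, c) ∈ TT d m := by
  classical
  obtain ⟨i₁, hi₁⟩ : ∃ i, v i ≠ 0 := by
    by_contra h; push_neg at h; exact hv (funext h)
  set h : ℕ := Finset.univ.sup (fun i => (v i).natAbs) with hh
  have hvM : ∀ i, |v i| ≤ (m : ℤ) - 1 := by
    intro i
    have h1 := hvw i
    have h2 := hf 1 i
    have h3 := hf 0 i
    have := (f 1 i - f 0 i).abs_eq_natAbs
    have := (v i).abs_eq_natAbs
    omega
  have hle : ∀ i, (v i).natAbs ≤ h := fun i => Finset.le_sup (f := fun i => (v i).natAbs) (Finset.mem_univ i)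
  have h1le : 1 ≤ h := by
    have := hle i₁
    have : 1 ≤ (v i₁).natAbs := by omega
    omega
  have hhn : h ≤ m - 1 := by
    apply Finset.sup_le
    intro i _
    have := hvM i
    have := (v i).abs_eq_natAbs
    omega
  obtain ⟨i₂, -, hi₂⟩ := Finset.exists_mem_eq_sup Finset.univ
    ⟨i₁, Finset.mem_univ i₁⟩ (fun i => (v i).natAbs)
  rw [TT, Finset.mem_biUnion]
  refine ⟨h, Finset.mem_Icc.mpr ⟨h1le, hhn⟩, ?_⟩
  rw [Finset.mem_product]
  constructor
  · rw [Finset.mem_Icc]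
    constructor <;> (intro i; have := hf 0 i; simp; omega)
  rw [Finset.mem_product]
  have hvi₂ : |v i₂| = (h : ℤ) := by
    have := (v i₂).abs_eq_natAbs
    omega
  constructor
  · rw [Finset.mem_sdiff]
    constructor
    · rw [Finset.mem_Icc]
      constructor <;> (intro i; have h1 := hle i; have := (v i).abs_eq_natAbs; simp; omega)
    · rw [Finset.mem_Icc]
      intro hcon
      obtain ⟨hlo, hhi⟩ := hcon
      have h1 := hlo i₂
      have h2 := hhi i₂
      simp at h1 h2
      omega
  · rw [Finset.mem_Icc]
    have hq : ∀ j, |c j| ≤ ((m : ℤ) - 1) / (h : ℤ) := by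
      intro j
      rw [Int.le_ediv_iff_mul_le (by exact_mod_cast h1le)]
      have he := heq j i₂
      have h1 := hf j i₂
      have h2 := hf 0 i₂
      have habs : |c j * v i₂| ≤ (m : ℤ) - 1 := by
        have : c j * v i₂ = f j i₂ - f 0 i₂ := by omega
        rw [this]
        rw [abs_le]; omega
      rw [abs_mul, hvi₂] at habs
      exact habs
    constructor <;> intro j <;> simp only
    · by_cases hj : j = 0
      · simp [hj, hc0]
      · simp only [hj, if_false]
        have := hq j
        have := abs_le.mp this
        omega
    · by_cases hj : j = 0
      · simp [hj, hc0]
      · simp only [hj, if_false]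
        have := abs_le.mp (hq j)
        omega



/-- `a^(e+1) ≤ b^(e+1) + (e+1)*(a-b)*a^e` for naturals `b ≤ a`. -/
lemma nat_pow_le_aux (a b : ℕ) (hba : b ≤ a) : ∀ e : ℕ,
    a ^ (e + 1) ≤ b ^ (e + 1) + (e + 1) * (a - b) * a ^ e := by
  intro e
  induction e with
  | zero => simp; omega
  | succ e ih =>
    have hab : a = b + (a - b) := by omega
    have hble : b ^ (e + 1) ≤ a ^ (e + 1) := Nat.pow_le_pow_left hba _
    calc a ^ (e + 2) = a * a ^ (e + 1) := by ring
      _ ≤ a * (b ^ (e + 1) + (e + 1) * (a - b) * a ^ e) := Nat.mul_le_mul_left a ih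
      _ = a * b ^ (e + 1) + (e + 1) * (a - b) * a ^ (e + 1) := by ring
      _ = b * b ^ (e + 1) + (a - b) * b ^ (e + 1) + (e + 1) * (a - b) * a ^ (e + 1) := by
          nth_rewrite 1 [hab]; ring
      _ ≤ b ^ (e + 2) + (a - b) * a ^ (e + 1) + (e + 1) * (a - b) * a ^ (e + 1) := by
          have : b * b ^ (e+1) = b ^ (e+2) := by ring
          rw [this]; gcongr
      _ = b ^ (e + 2) + (e + 2) * (a - b) * a ^ (e + 1) := by ring

lemma TT_card_le (d m : ℕ) (hd : 1 ≤ d) (hm : 2 ≤ m) :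
    (TT d m).card ≤ ∑ h ∈ Finset.Icc 1 (m - 1),
      m ^ d * (2 * d * (2 * h + 1) ^ (d - 1)) * ((2 * (((m : ℤ) - 1) / (h : ℤ)) + 1).toNat) ^ d := by
  classical
  refine le_trans (Finset.card_biUnion_le) (Finset.sum_le_sum ?_)
  intro h hh
  rw [Finset.mem_Icc] at hh
  obtain ⟨h1, h2⟩ := hh
  rw [Finset.card_product, Finset.card_product]
  -- box card
  have hbox : (Finset.Icc (fun _ : Fin d => (0:ℤ)) (fun _ => (m : ℤ) - 1)).card = m ^ d := by
    rw [Pi.card_Icc]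
    have : ∀ i : Fin d, (Finset.Icc (0:ℤ) ((m:ℤ)-1)).card = m := by
      intro i
      rw [Int.card_Icc]
      omega
    rw [Finset.prod_congr rfl (fun i _ => this i), Finset.prod_const, Finset.card_univ,
      Fintype.card_fin]
  -- annulus card
  have hsub : Finset.Icc (fun _ : Fin d => -((h:ℤ)-1)) (fun _ => (h:ℤ)-1) ⊆
      Finset.Icc (fun _ => -(h:ℤ)) (fun _ => (h:ℤ)) := by
    apply Finset.Icc_subset_Icc <;> (intro i; simp)
  have hbig : (Finset.Icc (fun _ : Fin d => -(h:ℤ)) (fun _ => (h:ℤ))).card = (2*h+1) ^ d := by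
    rw [Pi.card_Icc]
    have : ∀ i : Fin d, (Finset.Icc (-(h:ℤ)) ((h:ℤ))).card = 2*h+1 := by
      intro i; rw [Int.card_Icc]; omega
    rw [Finset.prod_congr rfl (fun i _ => this i), Finset.prod_const, Finset.card_univ,
      Fintype.card_fin]
  have hsmall : (Finset.Icc (fun _ : Fin d => -((h:ℤ)-1)) (fun _ => (h:ℤ)-1)).card = (2*h-1) ^ d := by
    rw [Pi.card_Icc]
    have : ∀ i : Fin d, (Finset.Icc (-((h:ℤ)-1)) ((h:ℤ)-1)).card = 2*h-1 := by
      intro i; rw [Int.card_Icc]; omega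
    rw [Finset.prod_congr rfl (fun i _ => this i), Finset.prod_const, Finset.card_univ,
      Fintype.card_fin]
  have hann : (Finset.Icc (fun _ : Fin d => -(h:ℤ)) (fun _ => (h:ℤ)) \
      Finset.Icc (fun _ => -((h:ℤ)-1)) (fun _ => (h:ℤ)-1)).card ≤ 2 * d * (2*h+1) ^ (d-1) := by
    rw [Finset.card_sdiff_of_subset hsub, hbig, hsmall]
    obtain ⟨e, rfl⟩ : ∃ e, d = e + 1 := ⟨d - 1, by omega⟩
    have := nat_pow_le_aux (2*h+1) (2*h-1) (by omega) e
    have hdiff : 2*h+1 - (2*h-1) = 2 := by omega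
    rw [hdiff] at this
    simp only [Nat.add_sub_cancel]
    rw [tsub_le_iff_right]
    calc (2*h+1)^(e+1) ≤ (2*h-1)^(e+1) + (e+1)*2*(2*h+1)^e := this
      _ = 2*(e+1)*(2*h+1)^e + (2*h-1)^(e+1) := by ring
  -- c-box card
  have hcbox : (Finset.Icc (fun j : Fin (d + 1) => if j = 0 then 0 else -(((m : ℤ) - 1) / (h : ℤ)))
      (fun j => if j = 0 then 0 else ((m : ℤ) - 1) / (h : ℤ))).card
      = ((2 * (((m : ℤ) - 1) / (h : ℤ)) + 1).toNat) ^ d := by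
    rw [Pi.card_Icc, Fin.prod_univ_succ]
    simp only [if_pos rfl]
    have hsucc : ∀ j : Fin d, (j.succ : Fin (d+1)) ≠ 0 := fun j => Fin.succ_ne_zero j
    have : ∀ j : Fin d, (Finset.Icc (if (j.succ : Fin (d+1)) = 0 then 0 else -(((m : ℤ) - 1) / (h : ℤ)))
        (if (j.succ : Fin (d+1)) = 0 then 0 else ((m : ℤ) - 1) / (h : ℤ))).card
        = (2 * (((m : ℤ) - 1) / (h : ℤ)) + 1).toNat := by
      intro j
      rw [if_neg (hsucc j), if_neg (hsucc j), Int.card_Icc]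
      congr 1
      ring
    rw [Finset.prod_congr rfl (fun j _ => this j), Finset.prod_const, Finset.card_univ,
      Fintype.card_fin, Int.card_Icc]
    simp
  rw [hbox, hcbox]
  have := hann
  calc m ^ d * ((Finset.Icc (fun _ : Fin d => -(h:ℤ)) (fun _ => (h:ℤ)) \
      Finset.Icc (fun _ => -((h:ℤ)-1)) (fun _ => (h:ℤ)-1)).card
      * ((2 * (((m : ℤ) - 1) / (h : ℤ)) + 1).toNat) ^ d)
      ≤ m ^ d * ((2 * d * (2*h+1) ^ (d-1)) * ((2 * (((m : ℤ) - 1) / (h : ℤ)) + 1).toNat) ^ d) := by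
        gcongr
    _ = m ^ d * (2 * d * (2 * h + 1) ^ (d - 1)) * ((2 * (((m : ℤ) - 1) / (h : ℤ)) + 1).toNat) ^ d := by
        ring


lemma term_bound_real (a : ℕ) (mr hr q : ℝ) (h1 : 1 ≤ hr) (hm1 : 1 ≤ mr) (hhm : hr ≤ mr)
    (hq0 : 0 ≤ q) (hq : q * hr ≤ mr - 1) :
    mr ^ (a + 1) * (2 * (a + 1) * (2 * hr + 1) ^ a) * (2 * q + 1) ^ (a + 1) ≤
      2 * (a + 1) * 3 ^ (2 * a + 1) * mr ^ (2 * (a + 1)) * (1 / hr) := by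
  have hhr : 0 < hr := lt_of_lt_of_le zero_lt_one h1
  have hb1 : 2 * hr + 1 ≤ 3 * hr := by linarith
  have hb2 : 2 * q + 1 ≤ 3 * mr / hr := by
    rw [le_div_iff₀ hhr]
    nlinarith
  have key : mr ^ (a + 1) * (2 * (a + 1) * (2 * hr + 1) ^ a) * (2 * q + 1) ^ (a + 1) ≤
      mr ^ (a + 1) * (2 * (a + 1) * (3 * hr) ^ a) * (3 * mr / hr) ^ (a + 1) := by
    gcongr <;> first | linarith | (rw [le_div_iff₀ hhr]; nlinarith)
  refine key.trans (le_of_eq ?_)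
  rw [mul_pow, div_pow, mul_pow]
  field_simp
  ring

/-- Number of collinear `k`-tuples (ordered tuples of distinct points on a common
line) in the grid `[m]^d`. -/
noncomputable def collinearTuples (d k m : ℕ) : ℕ :=
  Nat.card {f : Fin k → (Fin d → ℤ) // Function.Injective f ∧
    (∀ j i, 0 ≤ f j i ∧ f j i < (m : ℤ)) ∧
    Collinear ℝ (Set.range (fun j => fun i => ((f j i : ℝ))))}

/-- For `k = d + 1`, the number of collinear `k`-tuples in `[m]^d` is
`O(m^{d+k-1} log m) = O(m^{2d} log m)`. -/
theorem stmt1 (d : ℕ) (hd : 2 ≤ d) :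
    ∃ C : ℝ, 0 < C ∧ ∀ m : ℕ, 2 ≤ m →
      (collinearTuples d (d + 1) m : ℝ) ≤ C * (m : ℝ) ^ (2 * d) * Real.log m := by
  classical
  obtain ⟨a, rfl⟩ : ∃ a, d = a + 1 := ⟨d - 1, by omega⟩
  set K : ℝ := 2 * (a + 1) * 3 ^ (2 * a + 1) with hK
  have hlog2 : 0 < Real.log 2 := Real.log_pos one_lt_two
  have hKpos : 0 < K := by positivity
  refine ⟨K * (1 / Real.log 2 + 1), by positivity, ?_⟩
  intro m hm
  -- Step 1: the injection into TT
  have hcard : collinearTuples (a + 1) (a + 1 + 1) m ≤ (TT (a + 1) m).card := by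
    rw [← Nat.card_eq_finsetCard]
    have hstruct : ∀ s : {f : Fin (a + 1 + 1) → (Fin (a + 1) → ℤ) // Function.Injective f ∧
        (∀ j i, 0 ≤ f j i ∧ f j i < (m : ℤ)) ∧
        Collinear ℝ (Set.range (fun j => fun i => ((f j i : ℝ))))},
        ∃ (v : Fin (a + 1) → ℤ) (c : Fin (a + 1 + 1) → ℤ), v ≠ 0 ∧ c 0 = 0 ∧
          (∀ i, |v i| ≤ |s.1 1 i - s.1 0 i|) ∧ (∀ j i, s.1 j i = s.1 0 i + c j * v i) :=
      fun s => collinear_int_structure hd s.1 s.2.1 s.2.2.2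
    choose V C hv hc0 hvw heq using hstruct
    refine Nat.card_le_card_of_injective
      (fun s => ⟨(s.1 0, V s, C s),
        mem_TT hm s.1 (V s) (C s) s.2.2.1 (hv s) (hc0 s) (hvw s) (heq s)⟩) ?_
    intro s t hst
    simp only [Subtype.mk.injEq, Prod.mk.injEq] at hst
    obtain ⟨h0, hV, hC⟩ := hst
    apply Subtype.ext
    funext j i
    rw [heq s j i, heq t j i, hV, hC, congrFun h0 i]
  -- Step 2: bound the cardinality sum by reals
  have hm1R : (1 : ℝ) ≤ (m : ℝ) := by exact_mod_cast Nat.one_le_of_lt hm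
  have hsum : ((TT (a + 1) m).card : ℝ) ≤
      K * (m : ℝ) ^ (2 * (a + 1)) * ∑ h ∈ Finset.Icc 1 (m - 1), (1 / (h : ℝ)) := by
    have h1 := TT_card_le (a + 1) m (by omega) hm
    have h2 : ((TT (a + 1) m).card : ℝ) ≤
        ∑ h ∈ Finset.Icc 1 (m - 1),
          ((m : ℝ) ^ (a + 1) * (2 * (a + 1) * (2 * (h : ℝ) + 1) ^ a) *
            (2 * ((((m : ℤ) - 1) / (h : ℤ) : ℤ) : ℝ) + 1) ^ (a + 1)) := by
      calc ((TT (a + 1) m).card : ℝ) ≤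
          ((∑ h ∈ Finset.Icc 1 (m - 1), m ^ (a + 1) * (2 * (a + 1) * (2 * h + 1) ^ (a + 1 - 1)) *
            ((2 * (((m : ℤ) - 1) / (h : ℤ)) + 1).toNat) ^ (a + 1) : ℕ) : ℝ) := by
            exact_mod_cast h1
        _ = ∑ h ∈ Finset.Icc 1 (m - 1),
          ((m : ℝ) ^ (a + 1) * (2 * (a + 1) * (2 * (h : ℝ) + 1) ^ a) *
            (2 * ((((m : ℤ) - 1) / (h : ℤ) : ℤ) : ℝ) + 1) ^ (a + 1)) := by
            push_cast
            refine Finset.sum_congr rfl fun h hh => ?_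
            rw [Finset.mem_Icc] at hh
            have hh1 : (1 : ℤ) ≤ (h : ℤ) := by exact_mod_cast hh.1
            have hq0 : (0 : ℤ) ≤ ((m : ℤ) - 1) / (h : ℤ) :=
              Int.ediv_nonneg (by omega) (by omega)
            have htn : (((2 * (((m : ℤ) - 1) / (h : ℤ)) + 1).toNat : ℕ) : ℝ)
                = 2 * ((((m : ℤ) - 1) / (h : ℤ) : ℤ) : ℝ) + 1 := by
              rw [← Int.cast_natCast, Int.toNat_of_nonneg (by omega)]
              push_cast
              ring
            try simp only [Nat.add_sub_cancel]
            try rw [htn]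
            try push_cast
            try ring
    refine h2.trans ?_
    rw [Finset.mul_sum]
    refine Finset.sum_le_sum fun h hh => ?_
    rw [Finset.mem_Icc] at hh
    have hh1 : 1 ≤ h := hh.1
    have hhm' : h ≤ m - 1 := hh.2
    have hh1R : (1 : ℝ) ≤ (h : ℝ) := by exact_mod_cast hh1
    have hhmR : (h : ℝ) ≤ (m : ℝ) := by
      have : h ≤ m := by omega
      exact_mod_cast this
    have hq0Z : (0 : ℤ) ≤ ((m : ℤ) - 1) / (h : ℤ) :=
      Int.ediv_nonneg (by omega) (by positivity)
    have hq0 : (0 : ℝ) ≤ ((((m : ℤ) - 1) / (h : ℤ) : ℤ) : ℝ) := by exact_mod_cast hq0Z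
    have hqh : ((((m : ℤ) - 1) / (h : ℤ) : ℤ) : ℝ) * (h : ℝ) ≤ (m : ℝ) - 1 := by
      have hZ : (((m : ℤ) - 1) / (h : ℤ)) * (h : ℤ) ≤ (m : ℤ) - 1 :=
        Int.ediv_mul_le _ (by omega)
      calc ((((m : ℤ) - 1) / (h : ℤ) : ℤ) : ℝ) * (h : ℝ)
          = (((((m : ℤ) - 1) / (h : ℤ)) * (h : ℤ) : ℤ) : ℝ) := by push_cast; ring
        _ ≤ (((m : ℤ) - 1 : ℤ) : ℝ) := by exact_mod_cast hZ
        _ = (m : ℝ) - 1 := by push_cast; ring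
    have := term_bound_real a (m : ℝ) (h : ℝ) ((((m : ℤ) - 1) / (h : ℤ) : ℤ) : ℝ)
      hh1R hm1R hhmR hq0 hqh
    calc (m : ℝ) ^ (a + 1) * (2 * (a + 1) * (2 * (h : ℝ) + 1) ^ a) *
          (2 * ((((m : ℤ) - 1) / (h : ℤ) : ℤ) : ℝ) + 1) ^ (a + 1)
        ≤ 2 * (a + 1) * 3 ^ (2 * a + 1) * (m : ℝ) ^ (2 * (a + 1)) * (1 / (h : ℝ)) := this
      _ = K * (m : ℝ) ^ (2 * (a + 1)) * (1 / (h : ℝ)) := by rw [hK]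
  -- Step 3: harmonic sum bound
  have hharm : ∑ h ∈ Finset.Icc 1 (m - 1), (1 / (h : ℝ)) ≤ 1 + Real.log m := by
    have h1 : ∑ h ∈ Finset.Icc 1 (m - 1), (1 / (h : ℝ)) = ((harmonic (m - 1) : ℚ) : ℝ) := by
      rw [harmonic_eq_sum_Icc]
      push_cast
      refine Finset.sum_congr rfl fun h _ => ?_
      rw [one_div]
    rw [h1]
    refine (harmonic_le_one_add_log (m - 1)).trans ?_
    have : Real.log ((m : ℝ) - 1) ≤ Real.log m := by
      apply Real.log_le_log (by norm_num; exact_mod_cast hm) (by linarith)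
    have hcast : ((m - 1 : ℕ) : ℝ) = (m : ℝ) - 1 := by
      have : (1 : ℕ) ≤ m := by omega
      push_cast [this]
      ring
    rw [hcast]
    linarith
  -- Step 4: conclude
  have hlogm : Real.log 2 ≤ Real.log m := by
    apply Real.log_le_log (by norm_num)
    exact_mod_cast hm
  have hfin : K * (m : ℝ) ^ (2 * (a + 1)) * (1 + Real.log m) ≤
      K * (1 / Real.log 2 + 1) * (m : ℝ) ^ (2 * (a + 1)) * Real.log m := by
    have hmpow : (0 : ℝ) ≤ (m : ℝ) ^ (2 * (a + 1)) := by positivity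
    have h1 : 1 + Real.log m ≤ (1 / Real.log 2 + 1) * Real.log m := by
      have : 1 ≤ (1 / Real.log 2) * Real.log m := by
        rw [one_div, inv_mul_eq_div, le_div_iff₀ hlog2]
        linarith
      have hlm : 0 ≤ Real.log m := by linarith
      calc 1 + Real.log m ≤ (1 / Real.log 2) * Real.log m + Real.log m := by linarith
        _ = (1 / Real.log 2 + 1) * Real.log m := by ring
    calc K * (m : ℝ) ^ (2 * (a + 1)) * (1 + Real.log m)
        ≤ K * (m : ℝ) ^ (2 * (a + 1)) * ((1 / Real.log 2 + 1) * Real.log m) := by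
          apply mul_le_mul_of_nonneg_left h1 (by positivity)
      _ = K * (1 / Real.log 2 + 1) * (m : ℝ) ^ (2 * (a + 1)) * Real.log m := by ring
  calc (collinearTuples (a + 1) (a + 1 + 1) m : ℝ)
      ≤ ((TT (a + 1) m).card : ℝ) := by exact_mod_cast hcard
    _ ≤ K * (m : ℝ) ^ (2 * (a + 1)) * ∑ h ∈ Finset.Icc 1 (m - 1), (1 / (h : ℝ)) := hsum
    _ ≤ K * (m : ℝ) ^ (2 * (a + 1)) * (1 + Real.log m) := by
        apply mul_le_mul_of_nonneg_left hharm (by positivity)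
    _ ≤ K * (1 / Real.log 2 + 1) * (m : ℝ) ^ (2 * (a + 1)) * Real.log m := hfin
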